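/- Let Y, V be Banach spaces and Z = [Y ⊕ V]_{ℓ_q} for 1 ≤ q ≤ ∞. Given 𝒯_Y = (A_1,...,A_k) ∈ L(Y)^k with ‖𝒯_Y‖_p = 1, define T_i ∈ L(Z) by T_i(y,v) = (A_i y, 0), and 𝒯_Z = (T_1,...,T_k). Then ‖𝒯_Z‖_p = ‖𝒯_Y‖_p = 1 and w_p(𝒯_Z) = w_p(𝒯_Y). Consequently n_{(p,k)}(Z) ≤ n_{(p,k)}(Y). -/

import Mathlib

open scoped ENNReal

noncomputable section

/-- The set Π_X of pairs (x, x*) with ‖x‖ = 1, ‖x*‖ = 1 and x*(x) = 1. -/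
def dualPairs (𝕜 X : Type*) [RCLike 𝕜] [NormedAddCommGroup X] [NormedSpace 𝕜 X] :
    Set (X × (X →L[𝕜] 𝕜)) :=
  {q | ‖q.1‖ = 1 ∧ ‖q.2‖ = 1 ∧ q.2 q.1 = 1}

/-- Numerical range of an operator. -/
def numRange {𝕜 X : Type*} [RCLike 𝕜] [NormedAddCommGroup X] [NormedSpace 𝕜 X]
    (T : X →L[𝕜] X) : Set 𝕜 :=
  {c | ∃ q ∈ dualPairs 𝕜 X, c = q.2 (T q.1)}

/-- Numerical radius of an operator. -/
def numRadius {𝕜 X : Type*} [RCLike 𝕜] [NormedAddCommGroup X] [NormedSpace 𝕜 X]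
    (T : X →L[𝕜] X) : ℝ :=
  sSup {r | ∃ q ∈ dualPairs 𝕜 X, r = ‖q.2 (T q.1)‖}

/-- Joint numerical range of a k-tuple of operators. -/
def jointNumRange {𝕜 X : Type*} [RCLike 𝕜] [NormedAddCommGroup X] [NormedSpace 𝕜 X]
    {k : ℕ} (T : Fin k → X →L[𝕜] X) : Set (Fin k → 𝕜) :=
  {v | ∃ q ∈ dualPairs 𝕜 X, v = fun i => q.2 (T i q.1)}

/-- The p-th joint numerical radius of a k-tuple of operators. -/
def jointNumRadius {𝕜 X : Type*} [RCLike 𝕜] [NormedAddCommGroup X] [NormedSpace 𝕜 X]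
    (p : ℝ) {k : ℕ} (T : Fin k → X →L[𝕜] X) : ℝ :=
  sSup {r | ∃ q ∈ dualPairs 𝕜 X, r = (∑ i, ‖q.2 (T i q.1)‖ ^ p) ^ (1 / p)}

/-- The p-th joint operator norm of a k-tuple of operators. -/
def jointOpNorm {𝕜 X Y : Type*} [RCLike 𝕜] [NormedAddCommGroup X] [NormedSpace 𝕜 X]
    [NormedAddCommGroup Y] [NormedSpace 𝕜 Y]
    (p : ℝ) {k : ℕ} (T : Fin k → X →L[𝕜] Y) : ℝ :=
  sSup {r | ∃ x : X, ‖x‖ = 1 ∧ r = (∑ i, ‖T i x‖ ^ p) ^ (1 / p)}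

/-- The numerical index of a space. -/
def numIndex (𝕜 X : Type*) [RCLike 𝕜] [NormedAddCommGroup X] [NormedSpace 𝕜 X] : ℝ :=
  sInf {r | ∃ T : X →L[𝕜] X, ‖T‖ = 1 ∧ r = numRadius T}

/-- The (p,k)-th joint numerical index of a space. -/
def jointNumIndex (p : ℝ) (k : ℕ) (𝕜 X : Type*) [RCLike 𝕜] [NormedAddCommGroup X]
    [NormedSpace 𝕜 X] : ℝ :=
  sInf {r | ∃ T : Fin k → X →L[𝕜] X, jointOpNorm p T = 1 ∧ r = jointNumRadius p T}

section Aux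
variable {𝕜 Y V : Type*} [RCLike 𝕜]
  [NormedAddCommGroup Y] [NormedSpace 𝕜 Y]
  [NormedAddCommGroup V] [NormedSpace 𝕜 V]
  (q : ℝ≥0∞) [Fact (1 ≤ q)]

lemma myProdNormMono {y₁ y₂ : Y} {v₁ v₂ : V} (h1 : ‖y₁‖ ≤ ‖y₂‖) (h2 : ‖v₁‖ ≤ ‖v₂‖) :
    ‖(WithLp.equiv q (Y × V)).symm (y₁, v₁)‖ ≤ ‖(WithLp.equiv q (Y × V)).symm (y₂, v₂)‖ := by
  rcases eq_or_ne q ∞ with hq | hq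
  · subst hq
    rw [WithLp.prod_norm_eq_sup, WithLp.prod_norm_eq_sup]
    simp only [WithLp.equiv_symm_apply, WithLp.toLp_fst, WithLp.toLp_snd]
    exact sup_le_sup h1 h2
  · have hq0 : 0 < q.toReal :=
      ENNReal.toReal_pos (lt_of_lt_of_le zero_lt_one (Fact.out : 1 ≤ q)).ne' hq
    rw [WithLp.prod_norm_eq_add hq0, WithLp.prod_norm_eq_add hq0]
    simp only [WithLp.equiv_symm_apply, WithLp.toLp_fst, WithLp.toLp_snd]
    apply Real.rpow_le_rpow (by positivity) ?_ (by positivity)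
    exact add_le_add (Real.rpow_le_rpow (norm_nonneg _) h1 hq0.le)
      (Real.rpow_le_rpow (norm_nonneg _) h2 hq0.le)

lemma myFstNormLe (z : WithLp q (Y × V)) : ‖(WithLp.equiv q (Y × V) z).1‖ ≤ ‖z‖ := by
  have hz : z = (WithLp.equiv q (Y × V)).symm
      ((WithLp.equiv q (Y × V) z).1, (WithLp.equiv q (Y × V) z).2) := rfl
  calc ‖(WithLp.equiv q (Y × V) z).1‖
      = ‖(WithLp.equiv q (Y × V)).symm ((WithLp.equiv q (Y × V) z).1, 0)‖ := by simp
    _ ≤ ‖(WithLp.equiv q (Y × V)).symm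
          ((WithLp.equiv q (Y × V) z).1, (WithLp.equiv q (Y × V) z).2)‖ :=
        myProdNormMono q le_rfl (by simp)
    _ = ‖z‖ := by rw [← hz]

lemma mySndNormLe (z : WithLp q (Y × V)) : ‖(WithLp.equiv q (Y × V) z).2‖ ≤ ‖z‖ := by
  have hz : z = (WithLp.equiv q (Y × V)).symm
      ((WithLp.equiv q (Y × V) z).1, (WithLp.equiv q (Y × V) z).2) := rfl
  calc ‖(WithLp.equiv q (Y × V) z).2‖
      = ‖(WithLp.equiv q (Y × V)).symm (0, (WithLp.equiv q (Y × V) z).2)‖ := by simp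
    _ ≤ ‖(WithLp.equiv q (Y × V)).symm
          ((WithLp.equiv q (Y × V) z).1, (WithLp.equiv q (Y × V) z).2)‖ :=
        myProdNormMono q (by simp) le_rfl
    _ = ‖z‖ := by rw [← hz]

lemma myPhase (s : 𝕜) : ∃ θ : 𝕜, ‖θ‖ = 1 ∧ θ * s = (‖s‖ : 𝕜) := by
  rcases eq_or_ne s 0 with rfl | hs
  · exact ⟨1, by simp, by simp⟩
  · refine ⟨(‖s‖ : 𝕜) / s, ?_, ?_⟩
    · rw [norm_div, RCLike.norm_ofReal, abs_norm, div_self (norm_ne_zero_iff.mpr hs)]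
    · rw [div_mul_cancel₀ _ hs]

lemma myHolder (f : WithLp q (Y × V) →L[𝕜] 𝕜) (g : Y →L[𝕜] 𝕜) (h : V →L[𝕜] 𝕜)
    (hg : ∀ w, g w = f ((WithLp.equiv q (Y × V)).symm (w, 0)))
    (hh : ∀ u, h u = f ((WithLp.equiv q (Y × V)).symm (0, u)))
    {y : Y} {v : V} (hy : ‖y‖ ≤ 1) (hv : ‖v‖ ≤ 1) :
    ‖g‖ * ‖y‖ + ‖h‖ * ‖v‖ ≤ ‖f‖ * ‖(WithLp.equiv q (Y × V)).symm (y, v)‖ := by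
  refine le_of_forall_pos_le_add fun ε hε => ?_
  have hw : ∃ w : Y, ‖w‖ ≤ 1 ∧ ‖g‖ - ε / 2 ≤ ‖g w‖ := by
    rcases lt_or_ge (‖g‖ - ε / 2) 0 with h' | h'
    · exact ⟨0, by simp, by simp [h'.le]⟩
    · obtain ⟨w, hw1, hw2⟩ := g.exists_lt_apply_of_lt_opNorm
        (show ‖g‖ - ε / 2 < ‖g‖ by linarith)
      exact ⟨w, hw1.le, hw2.le⟩
  have hu : ∃ u : V, ‖u‖ ≤ 1 ∧ ‖h‖ - ε / 2 ≤ ‖h u‖ := by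
    rcases lt_or_ge (‖h‖ - ε / 2) 0 with h' | h'
    · exact ⟨0, by simp, by simp [h'.le]⟩
    · obtain ⟨u, hu1, hu2⟩ := h.exists_lt_apply_of_lt_opNorm
        (show ‖h‖ - ε / 2 < ‖h‖ by linarith)
      exact ⟨u, hu1.le, hu2.le⟩
  obtain ⟨w, hw1, hw2⟩ := hw
  obtain ⟨u, hu1, hu2⟩ := hu
  obtain ⟨θ₁, hθ₁, hθ₁'⟩ := myPhase (g w)
  obtain ⟨θ₂, hθ₂, hθ₂'⟩ := myPhase (h u)
  set ζ : WithLp q (Y × V) :=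
    (WithLp.equiv q (Y × V)).symm (((‖y‖ : 𝕜) * θ₁) • w, ((‖v‖ : 𝕜) * θ₂) • u) with hζdef
  have hζ : ‖ζ‖ ≤ ‖(WithLp.equiv q (Y × V)).symm (y, v)‖ := by
    apply myProdNormMono
    · rw [norm_smul, norm_mul, hθ₁, RCLike.norm_ofReal, abs_norm, mul_one]
      exact mul_le_of_le_one_right (norm_nonneg _) hw1
    · rw [norm_smul, norm_mul, hθ₂, RCLike.norm_ofReal, abs_norm, mul_one]
      exact mul_le_of_le_one_right (norm_nonneg _) hu1
  have hfζ : f ζ = ((‖y‖ * ‖g w‖ + ‖v‖ * ‖h u‖ : ℝ) : 𝕜) := by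
    have hsplit : ζ = ((‖y‖ : 𝕜) * θ₁) • (WithLp.equiv q (Y × V)).symm (w, 0)
        + ((‖v‖ : 𝕜) * θ₂) • (WithLp.equiv q (Y × V)).symm (0, u) := by
      simp only [WithLp.equiv_symm_apply, ← WithLp.toLp_smul, ← WithLp.toLp_add]
      rw [hζdef]
      congr 1
      simp [Prod.smul_mk, Prod.mk_add_mk]
    rw [hsplit, map_add, map_smul, map_smul, ← hg, ← hh]
    push_cast
    rw [smul_eq_mul, smul_eq_mul, mul_assoc, mul_assoc, hθ₁', hθ₂']
  have h1 : ‖f ζ‖ ≤ ‖f‖ * ‖(WithLp.equiv q (Y × V)).symm (y, v)‖ :=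
    (f.le_opNorm ζ).trans (mul_le_mul_of_nonneg_left hζ (norm_nonneg f))
  have h2 : ‖f ζ‖ = ‖y‖ * ‖g w‖ + ‖v‖ * ‖h u‖ := by
    rw [hfζ, RCLike.norm_ofReal, abs_of_nonneg (by positivity)]
  have hyn : (0:ℝ) ≤ ‖y‖ := norm_nonneg _
  have hvn : (0:ℝ) ≤ ‖v‖ := norm_nonneg _
  nlinarith [mul_le_mul_of_nonneg_left hw2 hyn, mul_le_mul_of_nonneg_left hu2 hvn]

def myProj : WithLp q (Y × V) →L[𝕜] Y :=
  (ContinuousLinearMap.fst 𝕜 Y V).comp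
    (WithLp.prodContinuousLinearEquiv q 𝕜 Y V : WithLp q (Y × V) →L[𝕜] Y × V)

def myInclY : Y →L[𝕜] WithLp q (Y × V) :=
  ((WithLp.prodContinuousLinearEquiv q 𝕜 Y V).symm : Y × V →L[𝕜] WithLp q (Y × V)).comp
    (ContinuousLinearMap.inl 𝕜 Y V)

def myInclV : V →L[𝕜] WithLp q (Y × V) :=
  ((WithLp.prodContinuousLinearEquiv q 𝕜 Y V).symm : Y × V →L[𝕜] WithLp q (Y × V)).comp
    (ContinuousLinearMap.inr 𝕜 Y V)

lemma myKey {p : ℝ} (hp : 1 ≤ p) {k : ℕ}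
    (A : Fin k → Y →L[𝕜] Y) (hA : jointOpNorm p A = 1)
    (T : Fin k → WithLp q (Y × V) →L[𝕜] WithLp q (Y × V))
    (hT : ∀ (i : Fin k) (z : WithLp q (Y × V)),
      T i z = (WithLp.equiv q (Y × V)).symm (A i ((WithLp.equiv q (Y × V)) z).1, 0)) :
    jointOpNorm p T = 1 ∧ jointNumRadius p T = jointNumRadius p A := by
  have hp0 : (0:ℝ) < p := lt_of_lt_of_le zero_lt_one hp
  have hp0' : p ≠ 0 := hp0.ne'
  set e := WithLp.equiv q (Y × V) with he
  -- the operator-norm sets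
  set SY : Set ℝ := {r | ∃ x : Y, ‖x‖ = 1 ∧ r = (∑ i, ‖A i x‖ ^ p) ^ (1 / p)} with hSY
  set SZ : Set ℝ := {r | ∃ z : WithLp q (Y × V), ‖z‖ = 1 ∧
      r = (∑ i, ‖T i z‖ ^ p) ^ (1 / p)} with hSZ
  have hAs : sSup SY = 1 := hA
  have hSYne : SY.Nonempty := by
    by_contra hne
    rw [Set.not_nonempty_iff_eq_empty] at hne
    rw [hne, Real.sSup_empty] at hAs
    norm_num at hAs
  have hSYbdd : BddAbove SY := by
    refine ⟨(∑ i, ‖A i‖ ^ p) ^ (1 / p), ?_⟩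
    rintro r ⟨x, hx, rfl⟩
    refine Real.rpow_le_rpow (by positivity) (Finset.sum_le_sum fun i _ =>
      Real.rpow_le_rpow (norm_nonneg _) ?_ hp0.le) (by positivity)
    exact (A i).unit_le_opNorm x hx.le
  have hSYle1 : ∀ r ∈ SY, r ≤ 1 := fun r hr => hAs ▸ le_csSup hSYbdd hr
  have hTznorm : ∀ (i : Fin k) (z : WithLp q (Y × V)), ‖T i z‖ = ‖A i (e z).1‖ := by
    intro i z
    rw [hT]
    exact WithLp.norm_toLp_fst q Y V _
  have hsub : SY ⊆ SZ := by
    rintro r ⟨x, hx, rfl⟩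
    refine ⟨e.symm (x, 0), by rw [he, WithLp.equiv_symm_apply, WithLp.norm_toLp_fst, hx], ?_⟩
    congr 1
    refine Finset.sum_congr rfl fun i _ => ?_
    rw [hTznorm i, he]
    simp
  have hSZle1 : ∀ r ∈ SZ, r ≤ 1 := by
    rintro r ⟨z, hz, rfl⟩
    have hy : ‖(e z).1‖ ≤ 1 := hz ▸ myFstNormLe q z
    rcases eq_or_ne (e z).1 0 with hy0 | hy0
    · have : ∀ i : Fin k, i ∈ Finset.univ → ‖T i z‖ ^ p = 0 := fun i _ => by
        rw [hTznorm i, hy0, map_zero, norm_zero, Real.zero_rpow hp0']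
      rw [Finset.sum_congr rfl this, Finset.sum_const, smul_zero, Real.zero_rpow
        (by positivity : (1:ℝ)/p ≠ 0)]
      norm_num
    · set c : ℝ := ‖(e z).1‖ with hc
      have hcpos : 0 < c := norm_pos_iff.mpr hy0
      set x : Y := ((c : 𝕜))⁻¹ • (e z).1 with hxdef
      have hxnorm : ‖x‖ = 1 := by
        rw [hxdef, norm_smul, norm_inv, RCLike.norm_ofReal, abs_of_pos hcpos, ← hc,
          inv_mul_cancel₀ hcpos.ne']
      have hAx : ∀ i, ‖A i (e z).1‖ = c * ‖A i x‖ := by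
        intro i
        rw [hxdef, map_smul, norm_smul, norm_inv, RCLike.norm_ofReal, abs_of_pos hcpos]
        field_simp
      have hsum : (∑ i, ‖T i z‖ ^ p) = c ^ p * ∑ i, ‖A i x‖ ^ p := by
        rw [Finset.mul_sum]
        refine Finset.sum_congr rfl fun i _ => ?_
        rw [hTznorm i, hAx i, Real.mul_rpow hcpos.le (norm_nonneg _)]
      rw [hsum, Real.mul_rpow (by positivity) (by positivity)]
      rw [← Real.rpow_mul hcpos.le, mul_one_div, div_self hp0', Real.rpow_one]
      have hmem : (∑ i, ‖A i x‖ ^ p) ^ (1 / p) ∈ SY := ⟨x, hxnorm, rfl⟩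
      calc c * (∑ i, ‖A i x‖ ^ p) ^ (1 / p) ≤ 1 * 1 := by
            exact mul_le_mul hy (hSYle1 _ hmem) (by positivity) zero_le_one
        _ = 1 := by norm_num
  have hSZbdd : BddAbove SZ := ⟨1, fun r hr => hSZle1 r hr⟩
  have part1 : jointOpNorm p T = 1 := by
    refine le_antisymm (csSup_le (hSYne.mono hsub) hSZle1) ?_
    calc (1:ℝ) = sSup SY := hAs.symm
      _ ≤ sSup SZ := csSup_le_csSup hSZbdd hSYne hsub
  -- Part 2: numerical radius
  set RA : Set ℝ := {r | ∃ pr ∈ dualPairs 𝕜 Y,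
      r = (∑ i, ‖pr.2 (A i pr.1)‖ ^ p) ^ (1 / p)} with hRAdef
  set RT : Set ℝ := {r | ∃ pr ∈ dualPairs 𝕜 (WithLp q (Y × V)),
      r = (∑ i, ‖pr.2 (T i pr.1)‖ ^ p) ^ (1 / p)} with hRTdef
  have hRAne : RA.Nonempty := by
    obtain ⟨r0, x, hx, -⟩ := hSYne
    have hx0 : x ≠ 0 := by
      intro h0
      rw [h0, norm_zero] at hx
      norm_num at hx
    obtain ⟨g, hg1, hg2⟩ := exists_dual_vector 𝕜 x (norm_ne_zero_iff.mpr hx0)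
    refine ⟨_, ⟨(x, g), ⟨hx, hg1, ?_⟩, rfl⟩⟩
    rw [hg2, hx]
    norm_num
  have hRAbdd : BddAbove RA := by
    refine ⟨(∑ i, ‖A i‖ ^ p) ^ (1 / p), ?_⟩
    rintro r ⟨⟨x, xs⟩, ⟨h1, h2, h3⟩, rfl⟩
    refine Real.rpow_le_rpow (by positivity) (Finset.sum_le_sum fun i _ =>
      Real.rpow_le_rpow (norm_nonneg _) ?_ hp0.le) (by positivity)
    calc ‖xs (A i x)‖ ≤ ‖xs‖ * ‖A i x‖ := xs.le_opNorm _
      _ ≤ 1 * (‖A i‖ * 1) := by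
          rw [h2]
          exact mul_le_mul le_rfl (by simpa [h1] using (A i).unit_le_opNorm x h1.le)
            (norm_nonneg _) zero_le_one
      _ = ‖A i‖ := by ring
  have hw0 : 0 ≤ sSup RA := by
    apply Real.sSup_nonneg
    rintro r ⟨pr, -, rfl⟩
    positivity
  have hsub2 : RA ⊆ RT := by
    rintro r ⟨⟨y, ys⟩, ⟨hy1, hy2, hy3⟩, rfl⟩
    set zsT : WithLp q (Y × V) →L[𝕜] 𝕜 := ys.comp (myProj q) with hzsTdef
    have happ : ∀ u : WithLp q (Y × V), zsT u = ys ((e u).1) := fun _ => rfl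
    have hnz : ‖(e.symm (y, (0:V)) : WithLp q (Y × V))‖ = 1 := by
      rw [he, WithLp.equiv_symm_apply, WithLp.norm_toLp_fst q Y V y, hy1]
    refine ⟨(e.symm (y, 0), zsT), ⟨hnz, ?_, ?_⟩, ?_⟩
    · apply le_antisymm
      · apply ContinuousLinearMap.opNorm_le_bound _ zero_le_one
        intro u
        rw [happ, one_mul]
        calc ‖ys ((e u).1)‖ ≤ ‖ys‖ * ‖(e u).1‖ := ys.le_opNorm _
          _ ≤ 1 * ‖u‖ := mul_le_mul (le_of_eq hy2) (myFstNormLe q u) (norm_nonneg _) zero_le_one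
          _ = ‖u‖ := one_mul _
      · have hone : (zsT) (e.symm (y, 0)) = 1 := hy3
        calc (1:ℝ) = ‖(zsT) (e.symm (y, 0))‖ := by rw [hone]; simp
          _ ≤ ‖zsT‖ * ‖(e.symm (y, (0:V)) : WithLp q (Y × V))‖ :=
              ContinuousLinearMap.le_opNorm _ _
          _ = ‖zsT‖ := by rw [hnz, mul_one]
    · exact hy3
    · congr 1
      refine Finset.sum_congr rfl fun i _ => ?_
      have : (zsT) (T i (e.symm (y, 0))) = ys (A i y) := by
        rw [happ, hT]
        rfl
      rw [this]
  have hRTlew : ∀ r ∈ RT, r ≤ sSup RA := by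
    rintro r ⟨⟨z, zs⟩, ⟨hz1, hz2, hz3⟩, rfl⟩
    set g : Y →L[𝕜] 𝕜 := zs.comp (myInclY q) with hgdef
    set gV : V →L[𝕜] 𝕜 := zs.comp (myInclV q) with hgVdef
    have hgapp : ∀ w' : Y, g w' = zs (e.symm (w', 0)) := fun _ => rfl
    have hgVapp : ∀ u : V, gV u = zs (e.symm (0, u)) := fun _ => rfl
    have hval : ∀ i, zs (T i z) = g (A i (e z).1) := fun i => by rw [hT]; rfl
    have hzyv : ‖(e.symm ((e z).1, (e z).2) : WithLp q (Y × V))‖ = 1 := hz1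
    have hy1 : ‖(e z).1‖ ≤ 1 := hz1 ▸ myFstNormLe q z
    have hv1 : ‖(e z).2‖ ≤ 1 := hz1 ▸ mySndNormLe q z
    have hhold : ‖g‖ * ‖(e z).1‖ + ‖gV‖ * ‖(e z).2‖ ≤ 1 := by
      have hmh := myHolder q zs g gV hgapp hgVapp hy1 hv1
      rw [hzyv, hz2, one_mul] at hmh
      exact hmh
    have hsum : g (e z).1 + gV (e z).2 = 1 := by
      have hz' : z = e.symm ((e z).1, 0) + e.symm (0, (e z).2) := by
        rw [he, WithLp.equiv_symm_apply, ← WithLp.toLp_add, Prod.mk_add_mk, add_zero, zero_add]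
        rfl
      have : zs z = g (e z).1 + gV (e z).2 := by
        conv_lhs => rw [hz']
        rw [map_add, hgapp, hgVapp]
      rw [← this, hz3]
    have hre : RCLike.re (g (e z).1) + RCLike.re (gV (e z).2) = 1 := by
      have := congrArg RCLike.re hsum
      simpa using this
    have hb1 : RCLike.re (g (e z).1) ≤ ‖g (e z).1‖ := RCLike.re_le_norm _
    have hb2 : ‖g (e z).1‖ ≤ ‖g‖ * ‖(e z).1‖ := g.le_opNorm _
    have hb3 : RCLike.re (gV (e z).2) ≤ ‖gV (e z).2‖ := RCLike.re_le_norm _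
    have hb4 : ‖gV (e z).2‖ ≤ ‖gV‖ * ‖(e z).2‖ := gV.le_opNorm _
    have hgVnn : 0 ≤ ‖gV‖ * ‖(e z).2‖ := mul_nonneg (norm_nonneg _) (norm_nonneg _)
    have heq1 : ‖g (e z).1‖ = ‖g‖ * ‖(e z).1‖ := by linarith
    have heq2 : RCLike.re (g (e z).1) = ‖g (e z).1‖ := by linarith
    have hle1 : ‖g‖ * ‖(e z).1‖ ≤ 1 := by linarith
    have hgy : g (e z).1 = ((‖g‖ * ‖(e z).1‖ : ℝ) : 𝕜) := by
      have h5 : (RCLike.re (g (e z).1) : 𝕜) = g (e z).1 :=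
        RCLike.re_eq_self_of_le (by linarith)
      rw [← h5, heq2, heq1]
    rcases eq_or_ne (‖g‖ * ‖(e z).1‖) 0 with hs0 | hs0
    · have hzero : ∀ i, ‖zs (T i z)‖ = 0 := by
        intro i
        rw [hval i]
        have hb : ‖g (A i (e z).1)‖ ≤ ‖A i‖ * (‖g‖ * ‖(e z).1‖) := by
          calc ‖g (A i (e z).1)‖ ≤ ‖g‖ * ‖A i (e z).1‖ := g.le_opNorm _
            _ ≤ ‖g‖ * (‖A i‖ * ‖(e z).1‖) :=
                mul_le_mul_of_nonneg_left ((A i).le_opNorm _) (norm_nonneg g)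
            _ = ‖A i‖ * (‖g‖ * ‖(e z).1‖) := by ring
        rw [hs0, mul_zero] at hb
        exact le_antisymm hb (norm_nonneg _)
      have hzs : (∑ i, ‖zs (T i z)‖ ^ p) = 0 :=
        Finset.sum_eq_zero fun i _ => by rw [hzero i, Real.zero_rpow hp0']
      rw [hzs, Real.zero_rpow (by positivity : (1:ℝ)/p ≠ 0)]
      exact hw0
    · have hgne : ‖g‖ ≠ 0 := fun h0 => hs0 (by rw [h0, zero_mul])
      have hyne : ‖(e z).1‖ ≠ 0 := fun h0 => hs0 (by rw [h0, mul_zero])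
      have hgpos : 0 < ‖g‖ := (norm_nonneg _).lt_of_ne (Ne.symm hgne)
      have hypos : 0 < ‖(e z).1‖ := (norm_nonneg _).lt_of_ne (Ne.symm hyne)
      set xh : Y := ((‖(e z).1‖ : 𝕜))⁻¹ • (e z).1 with hxh
      set gh : Y →L[𝕜] 𝕜 := ((‖g‖ : 𝕜))⁻¹ • g with hgh
      have hxhn : ‖xh‖ = 1 := by
        rw [hxh, norm_smul, norm_inv, RCLike.norm_ofReal, abs_of_pos hypos,
          inv_mul_cancel₀ hyne]
      have hghn : ‖gh‖ = 1 := by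
        rw [hgh, norm_smul ((‖g‖ : 𝕜))⁻¹ g, norm_inv, RCLike.norm_ofReal, abs_of_pos hgpos,
          inv_mul_cancel₀ hgne]
      have hghapp : ∀ w' : Y, gh w' = ((‖g‖ : 𝕜))⁻¹ * g w' := fun _ => rfl
      have hpair : gh xh = 1 := by
        rw [hxh, hghapp, map_smul, smul_eq_mul, hgy]
        push_cast
        field_simp
        rw [div_self (mul_ne_zero (by exact_mod_cast hgne) (by exact_mod_cast hyne))]
      have hmem : (∑ i, ‖gh (A i xh)‖ ^ p) ^ (1/p) ∈ RA := ⟨(xh, gh), ⟨hxhn, hghn, hpair⟩, rfl⟩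
      have hscale : ∀ i, ‖zs (T i z)‖ = (‖g‖ * ‖(e z).1‖) * ‖gh (A i xh)‖ := by
        intro i
        rw [hval i]
        have hx2 : gh (A i xh) = ((‖g‖ : 𝕜))⁻¹ * (((‖(e z).1‖ : 𝕜))⁻¹ * g (A i (e z).1)) := by
          rw [hxh, hghapp, map_smul, map_smul, smul_eq_mul]
        rw [hx2, norm_mul, norm_mul, norm_inv, norm_inv, RCLike.norm_ofReal,
          RCLike.norm_ofReal, abs_of_pos hgpos, abs_of_pos hypos]
        field_simp
      have hfin : (∑ i, ‖zs (T i z)‖ ^ p) ^ (1/p) ≤ (∑ i, ‖gh (A i xh)‖ ^ p) ^ (1/p) := by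
        refine Real.rpow_le_rpow (by positivity) (Finset.sum_le_sum fun i _ =>
          Real.rpow_le_rpow (norm_nonneg _) ?_ hp0.le) (by positivity)
        rw [hscale i]
        exact mul_le_of_le_one_left (norm_nonneg _) hle1
      exact hfin.trans (le_csSup hRAbdd hmem)
  have part2 : jointNumRadius p T = jointNumRadius p A := by
    have hT1 : jointNumRadius p T = sSup RT := rfl
    have hA1 : jointNumRadius p A = sSup RA := rfl
    rw [hT1, hA1]
    exact le_antisymm (csSup_le (hRAne.mono hsub2) hRTlew)
      (csSup_le_csSup ⟨sSup RA, fun r hr => hRTlew r hr⟩ hRAne hsub2)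
  exact ⟨part1, part2⟩

end Aux

theorem stmt13 {𝕜 Y V : Type*} [RCLike 𝕜]
    [NormedAddCommGroup Y] [NormedSpace 𝕜 Y] [CompleteSpace Y]
    [NormedAddCommGroup V] [NormedSpace 𝕜 V] [CompleteSpace V]
    (q : ℝ≥0∞) [Fact (1 ≤ q)] {p : ℝ} (hp : 1 ≤ p) {k : ℕ}
    (A : Fin k → Y →L[𝕜] Y) (hA : jointOpNorm p A = 1)
    (T : Fin k → WithLp q (Y × V) →L[𝕜] WithLp q (Y × V))
    (hT : ∀ (i : Fin k) (z : WithLp q (Y × V)),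
      T i z = (WithLp.equiv q (Y × V)).symm (A i ((WithLp.equiv q (Y × V)) z).1, 0)) :
    jointOpNorm p T = 1 ∧ jointNumRadius p T = jointNumRadius p A ∧
    jointNumIndex p k 𝕜 (WithLp q (Y × V)) ≤ jointNumIndex p k 𝕜 Y := by
  obtain ⟨h1, h2⟩ := myKey q hp A hA T hT
  refine ⟨h1, h2, ?_⟩
  unfold jointNumIndex
  apply csInf_le_csInf
  · refine ⟨0, ?_⟩
    rintro r ⟨T', -, rfl⟩
    unfold jointNumRadius
    apply Real.sSup_nonneg
    rintro r' ⟨pr, -, rfl⟩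
    positivity
  · exact ⟨_, A, hA, rfl⟩
  · rintro r ⟨B, hB, rfl⟩
    set TB : Fin k → WithLp q (Y × V) →L[𝕜] WithLp q (Y × V) :=
      fun i => (myInclY q).comp ((B i).comp (myProj q)) with hTBdef
    have hTB : ∀ (i : Fin k) (z : WithLp q (Y × V)),
        TB i z = (WithLp.equiv q (Y × V)).symm (B i ((WithLp.equiv q (Y × V)) z).1, 0) :=
      fun i z => rfl
    obtain ⟨hTB1, hTB2⟩ := myKey q hp B hB TB hTB
    exact ⟨TB, hTB1, hTB2.symm⟩
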